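/- Let R be a local ring whose residue field R/m_R has more than two elements, let T_2 ≅ R^× × R^× be the diagonal torus in GL_2(R) and B_2 the upper triangular Borel subgroup. Then the natural surjection B_2 → T_2 induces an isomorphism H_1(B_2, ℤ) ≅ H_1(T_2, ℤ). -/

import Mathlib

open CategoryTheory AlgebraicTopology

/-- The chain complex of the classifying space of `G`, with coefficients in `k`:
the levelwise free `k`-module on the nerve of `G`. -/
noncomputable def barComplex (k : Type) [Ring k] (G : Type) [Group G] :
    ChainComplex (ModuleCat k) ℕ :=
  (alternatingFaceMapComplex (ModuleCat k)).obj
    (((SimplicialObject.whiskering _ _).obj (ModuleCat.free k)).obj (nerve (SingleObj G)))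

/-- Group homology `H_n(G, k)` with trivial coefficients `k`, defined as the homology of the
classifying space of `G` with coefficients in `k`. -/
noncomputable def grpHomology (k : Type) [Ring k] (G : Type) [Group G] (n : ℕ) : ModuleCat k :=
  (barComplex k G).homology n

/-- The chain map induced by a group homomorphism. -/
noncomputable def barMap (k : Type) [Ring k] {G H : Type} [Group G] [Group H] (f : G →* H) :
    barComplex k G ⟶ barComplex k H :=
  (alternatingFaceMapComplex (ModuleCat k)).map
    (((SimplicialObject.whiskering _ _).obj (ModuleCat.free k)).map
      (nerveFunctor.map (X := Cat.of (SingleObj G)) (Y := Cat.of (SingleObj H))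
        (SingleObj.mapHom G H f).toCatHom))

/-- The map on group homology induced by a group homomorphism. -/
noncomputable def grpHomologyMap (k : Type) [Ring k] {G H : Type} [Group G] [Group H]
    (f : G →* H) (n : ℕ) : grpHomology k G n ⟶ grpHomology k H n :=
  HomologicalComplex.homologyMap (barMap k f) n

/-- `AddAut A` maps to `MulAut (Multiplicative A)`. -/
def addAutToMulAut {A : Type} [AddCommGroup A] :
    Multiplicative (AddAut A) →* MulAut (Multiplicative A) where
  toFun e := AddEquiv.toMultiplicative e.toAdd
  map_one' := by ext x; rfl
  map_mul' e₁ e₂ := by ext x; rfl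

/-- The action of the diagonal torus `T₂ = Rˣ × Rˣ` on `(R, +)` by `(a, b) · x = a b⁻¹ x`,
realizing the Borel subgroup `B₂` of upper triangular matrices as `R ⋊ T₂`. -/
def torusAction (R : Type) [CommRing R] : Rˣ × Rˣ →* MulAut (Multiplicative R) :=
  addAutToMulAut.comp ((DistribMulAction.toAddAut Rˣ R).comp
    (MonoidHom.mk' (fun p : Rˣ × Rˣ => p.1 * p.2⁻¹) (fun a b => by
      show (a * b).1 * ((a * b).2)⁻¹ = _
      rw [Prod.fst_mul, Prod.snd_mul, mul_inv, mul_mul_mul_comm])))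

namespace BarAux

open HomologicalComplex

variable (k : Type) [Ring k] (G : Type) [Group G]

/-- The `1`-simplex of the nerve attached to a group element. -/
def sx1 (g : G) : ComposableArrows (SingleObj G) 1 :=
  ComposableArrows.mk₁ (X₀ := SingleObj.star G) (X₁ := SingleObj.star G) g

/-- The `2`-simplex of the nerve attached to a pair of group elements. -/
def sx2 (g h : G) : ComposableArrows (SingleObj G) 2 :=
  ComposableArrows.mk₂ (X₀ := SingleObj.star G) (X₁ := SingleObj.star G)
    (X₂ := SingleObj.star G) g h

variable {G}

lemma δ0_sx2 (g h : G) : (nerve (SingleObj G)).δ 0 (sx2 G g h) = sx1 G h := by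
  refine ComposableArrows.ext₁ rfl rfl ?_; simp; rfl

lemma δ1_sx2 (g h : G) : (nerve (SingleObj G)).δ 1 (sx2 G g h) = sx1 G (h * g) := by
  refine ComposableArrows.ext₁ rfl rfl ?_; simp; rfl

lemma δ2_sx2 (g h : G) : (nerve (SingleObj G)).δ 2 (sx2 G g h) = sx1 G g := by
  refine ComposableArrows.ext₁ rfl rfl ?_; simp; rfl

variable (G)

lemma nerve_δ_one (i j : Fin 2) : (nerve (SingleObj G)).δ i = (nerve (SingleObj G)).δ j := by
  ext σ
  exact ComposableArrows.ext₀ rfl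

/-- The simplicial `k`-module on the nerve of `G`. -/
noncomputable abbrev sm :=
  (((SimplicialObject.whiskering _ _).obj (ModuleCat.free k)).obj (nerve (SingleObj G)))

lemma sm_δ (n : ℕ) (i : Fin (n + 2)) :
    (sm k G).δ i = (ModuleCat.free k).map ((nerve (SingleObj G)).δ i) := rfl

lemma d10_zero : (barComplex k G).d 1 0 = 0 := by
  rw [show (barComplex k G).d 1 0 = ∑ i : Fin 2, (-1 : ℤ) ^ (i : ℕ) • (sm k G).δ i from
    AlternatingFaceMapComplex.obj_d_eq (sm k G) 0]
  rw [Fin.sum_univ_two]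
  simp only [Fin.val_zero, pow_zero, one_smul, Fin.val_one, pow_one, neg_smul]
  rw [sm_δ, sm_δ, nerve_δ_one G 0 1]
  exact add_neg_cancel _

lemma d21_single (σ : ComposableArrows (SingleObj G) 2) :
    (barComplex k G).d 2 1 (Finsupp.single σ 1) =
      Finsupp.single ((nerve (SingleObj G)).δ 0 σ) 1
      - Finsupp.single ((nerve (SingleObj G)).δ 1 σ) 1
      + Finsupp.single ((nerve (SingleObj G)).δ 2 σ) 1 := by
  rw [show (barComplex k G).d 2 1 = ∑ i : Fin 3, (-1 : ℤ) ^ (i : ℕ) • (sm k G).δ i from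
    AlternatingFaceMapComplex.obj_d_eq (sm k G) 1]
  rw [Fin.sum_univ_three]
  have h : ∀ (i : Fin 3) (τ : ComposableArrows (SingleObj G) 2),
      ((sm k G).δ i) (Finsupp.single τ (1 : k)) =
        Finsupp.single ((nerve (SingleObj G)).δ i τ) 1 := by
    intro i τ
    rw [sm_δ]
    exact Finsupp.mapDomain_single
  have expand : ∀ (f g h : (barComplex k G).X 2 ⟶ (barComplex k G).X 1)
      (x : (barComplex k G).X 2),
      ((-1 : ℤ) ^ ((0 : Fin 3) : ℕ) • f + (-1 : ℤ) ^ ((1 : Fin 3) : ℕ) • g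
        + (-1 : ℤ) ^ ((2 : Fin 3) : ℕ) • h) x = f x - g x + h x := by
    intro f g h x
    show (1 : ℤ) • f x + (-1 : ℤ) • g x + (1 : ℤ) • h x = _
    simp [sub_eq_add_neg]
  refine (expand ((sm k G).δ 0) ((sm k G).δ 1) ((sm k G).δ 2) (Finsupp.single σ 1)).trans ?_
  erw [h, h, h]
  rfl

/-- The canonical splitting `X 1 → cycles 1` (every `1`-chain is a cycle). -/
noncomputable def cyc : (barComplex k G).X 1 ⟶ (barComplex k G).cycles 1 :=
  (barComplex k G).liftCycles (𝟙 _) 0 (ChainComplex.next_nat_succ 0)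
    (by rw [Category.id_comp, d10_zero])

lemma cyc_i : cyc k G ≫ (barComplex k G).iCycles 1 = 𝟙 _ :=
  (barComplex k G).liftCycles_i _ _ _ _

lemma i_cyc : (barComplex k G).iCycles 1 ≫ cyc k G = 𝟙 _ := by
  rw [← cancel_mono ((barComplex k G).iCycles 1), Category.assoc, cyc_i,
    Category.comp_id, Category.id_comp]

instance : Epi (cyc k G) := by
  constructor
  intro Z f g hfg
  rw [← Category.id_comp f, ← i_cyc, Category.assoc, hfg, ← Category.assoc, i_cyc,
    Category.id_comp]

/-- `1`-chains mapped to homology classes. -/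
noncomputable def pi1 : (barComplex k G).X 1 ⟶ (barComplex k G).homology 1 :=
  cyc k G ≫ (barComplex k G).homologyπ 1

lemma d21_pi1 : (barComplex k G).d 2 1 ≫ pi1 k G = 0 := by
  have h1 : (barComplex k G).d 2 1 ≫ cyc k G = (barComplex k G).toCycles 2 1 := by
    rw [← cancel_mono ((barComplex k G).iCycles 1), Category.assoc, cyc_i,
      Category.comp_id, toCycles_i]
  rw [pi1, ← Category.assoc, h1, toCycles_comp_homologyπ]

lemma pi1_rel (a b : G) :
    pi1 k G (Finsupp.single (sx1 G (a * b)) 1) =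
      pi1 k G (Finsupp.single (sx1 G a) 1) + pi1 k G (Finsupp.single (sx1 G b) 1) := by
  have h0 := d21_pi1 k G
  have h : pi1 k G ((barComplex k G).d 2 1 (Finsupp.single (sx2 G b a) 1)) = 0 :=
    by erw [← ConcreteCategory.comp_apply, h0]; rfl
  rw [d21_single] at h
  rw [δ0_sx2, δ1_sx2, δ2_sx2] at h
  have h' : pi1 k G (Finsupp.single (sx1 G a) 1 - Finsupp.single (sx1 G (a * b)) 1
      + Finsupp.single (sx1 G b) 1) = 0 := h
  erw [map_add, map_sub] at h'
  rw [sub_add_eq_add_sub, sub_eq_zero] at h'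
  exact h'.symm

/-- The universal map `G → H₁(G, k)`, as a monoid homomorphism. -/
noncomputable def pi1Hom : G →* Multiplicative ((barComplex k G).homology 1) :=
  MonoidHom.mk' (fun g => Multiplicative.ofAdd (pi1 k G (Finsupp.single (sx1 G g) 1)))
    (fun a b => congrArg Multiplicative.ofAdd (pi1_rel k G a b))

variable {G} {H : Type} [Group H]

lemma mapCA_sx1 (f : G →* H) (g : G) :
    ((SingleObj.mapHom G H f).mapComposableArrows 1).obj (sx1 G g) = sx1 H (f g) := by
  refine ComposableArrows.ext₁ rfl rfl ?_
  simp [sx1]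
  rfl

lemma barMap_f1_single (f : G →* H) (σ : ComposableArrows (SingleObj G) 1) :
    (barMap k f).f 1 (Finsupp.single σ 1) =
      Finsupp.single (((SingleObj.mapHom G H f).mapComposableArrows 1).obj σ) 1 := by
  show Finsupp.mapDomain _ _ = _
  exact Finsupp.mapDomain_single

lemma homologyMap_eq (f : G →* G)
    (hf : ∀ g : G, pi1 k G (Finsupp.single (sx1 G (f g)) 1) =
      pi1 k G (Finsupp.single (sx1 G g) 1)) :
    HomologicalComplex.homologyMap (barMap k f) 1 = 𝟙 _ := by
  have hc : cyc k G ≫ HomologicalComplex.cyclesMap (barMap k f) 1 =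
      (barMap k f).f 1 ≫ cyc k G := by
    rw [← cancel_mono ((barComplex k G).iCycles 1), Category.assoc, Category.assoc,
      HomologicalComplex.cyclesMap_i, ← Category.assoc, cyc_i, Category.id_comp,
      Category.comp_id]
  have key : (barMap k f).f 1 ≫ pi1 k G = pi1 k G := by
    refine ModuleCat.hom_ext (Finsupp.lhom_ext fun σ n => ?_)
    obtain ⟨X₀, X₁, g, rfl⟩ := ComposableArrows.mk₁_surjective σ
    have hσ : ComposableArrows.mk₁ g = sx1 G g := rfl
    rw [hσ]
    have hn : (Finsupp.single (sx1 G g) n) = n • Finsupp.single (sx1 G g) (1 : k) := by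
      rw [Finsupp.smul_single, smul_eq_mul, mul_one]
    erw [hn, map_smul, map_smul]
    congr 1
    show pi1 k G ((barMap k f).f 1 (Finsupp.single (sx1 G g) 1)) = _
    rw [barMap_f1_single, mapCA_sx1]
    exact hf g
  rw [← cancel_epi ((barComplex k G).homologyπ 1), HomologicalComplex.homologyπ_naturality,
    Category.comp_id, ← cancel_epi (cyc k G), ← Category.assoc, hc, Category.assoc]
  exact key

lemma barMap_f_single {n : ℕ} (f : G →* H) (σ : ComposableArrows (SingleObj G) n) :
    (barMap k f).f n (Finsupp.single σ 1) =
      Finsupp.single (σ ⋙ SingleObj.mapHom G H f) 1 := by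
  show Finsupp.mapDomain _ _ = _
  exact Finsupp.mapDomain_single

lemma barMap_id : barMap k (MonoidHom.id G) = 𝟙 (barComplex k G) := by
  ext n : 1
  refine ModuleCat.hom_ext (Finsupp.lhom_ext fun σ c => ?_)
  have hc : (Finsupp.single σ c) = c • Finsupp.single σ (1 : k) := by
    rw [Finsupp.smul_single, smul_eq_mul, mul_one]
  erw [hc, map_smul, map_smul]
  congr 1
  show (barMap k (MonoidHom.id G)).f n (Finsupp.single σ 1) = Finsupp.single σ 1
  erw [barMap_f_single, SingleObj.mapHom_id, Functor.comp_id]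
  rfl

lemma barMap_comp {P : Type} [Group P] (f : G →* H) (g : H →* P) :
    barMap k (g.comp f) = barMap k f ≫ barMap k g := by
  ext n : 1
  refine ModuleCat.hom_ext (Finsupp.lhom_ext fun σ c => ?_)
  have hc : (Finsupp.single σ c) = c • Finsupp.single σ (1 : k) := by
    rw [Finsupp.smul_single, smul_eq_mul, mul_one]
  erw [hc, map_smul, map_smul]
  congr 1
  show (barMap k (g.comp f)).f n (Finsupp.single σ 1) =
    (barMap k g).f n ((barMap k f).f n (Finsupp.single σ 1))
  erw [barMap_f_single, barMap_f_single, barMap_f_single, SingleObj.mapHom_comp]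
  rfl

end BarAux

section GroupTheory

variable (R : Type) [CommRing R] [IsLocalRing R]

lemma exists_good_unit
    (h : 3 ≤ Nat.card (IsLocalRing.ResidueField R) ∨ Infinite (IsLocalRing.ResidueField R)) :
    ∃ u w : Rˣ, (w : R) = 1 - u := by
  obtain ⟨r, hr0, hr1⟩ : ∃ r : IsLocalRing.ResidueField R, r ≠ 0 ∧ r ≠ 1 := by
    rcases h with h | h
    · by_contra hc
      push_neg at hc
      have hsurj : Function.Surjective
          (fun b : Bool => if b then (1 : IsLocalRing.ResidueField R) else 0) := by
        intro r
        rcases eq_or_ne r 0 with rfl | hr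
        · exact ⟨false, rfl⟩
        · exact ⟨true, (hc r hr).symm⟩
      have := Nat.card_le_card_of_surjective _ hsurj
      simp [Nat.card_eq_fintype_card] at this
      omega
    · obtain ⟨r, hr⟩ := ((Set.finite_singleton (0 : IsLocalRing.ResidueField R)).union
        (Set.finite_singleton 1)).infinite_compl.nonempty
      simp only [Set.mem_compl_iff, Set.mem_union, Set.mem_singleton_iff, not_or] at hr
      exact ⟨r, hr.1, hr.2⟩
  obtain ⟨a, rfl⟩ := Ideal.Quotient.mk_surjective (I := IsLocalRing.maximalIdeal R) r
  have hu : IsUnit a := by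
    by_contra hna
    exact hr0 (Ideal.Quotient.eq_zero_iff_mem.mpr hna)
  have hw : IsUnit (1 - a) := by
    by_contra hnw
    apply hr1
    have : Ideal.Quotient.mk (IsLocalRing.maximalIdeal R) (1 - a) = 0 :=
      Ideal.Quotient.eq_zero_iff_mem.mpr hnw
    rw [map_sub, map_one, sub_eq_zero] at this
    exact this.symm
  exact ⟨hu.unit, hw.unit, by simp⟩

omit [IsLocalRing R] in
lemma torusAction_toAdd (t : Rˣ × Rˣ) (n : Multiplicative R) :
    (torusAction R t n).toAdd = (↑t.1 * ↑t.2⁻¹ : R) * n.toAdd := rfl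

omit [IsLocalRing R] in
/-- Every element of `inl (Multiplicative R)` is a commutator in `B₂`. -/
lemma inl_eq_commutator (u w : Rˣ) (hw : (w : R) = 1 - u) (x : Multiplicative R) :
    ∃ a b : Multiplicative R ⋊[torusAction R] (Rˣ × Rˣ),
      SemidirectProduct.inl x = a * b * a⁻¹ * b⁻¹ := by
  set t : Rˣ × Rˣ := (u, 1) with ht
  set y : Multiplicative R := Multiplicative.ofAdd ((↑w⁻¹ : R) * x.toAdd) with hy0
  refine ⟨SemidirectProduct.inl y, SemidirectProduct.inr t, ?_⟩
  have hassoc : ∀ a b : Multiplicative R ⋊[torusAction R] (Rˣ × Rˣ),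
      a * b * a⁻¹ * b⁻¹ = a * (b * a⁻¹ * b⁻¹) := by
    intro a b; group
  rw [hassoc, ← map_inv SemidirectProduct.inl, ← map_inv SemidirectProduct.inr,
    ← SemidirectProduct.inl_aut t y⁻¹, ← map_mul]
  congr 1
  have hww : (w : R) * (↑w⁻¹ : R) = 1 := w.mul_inv
  have hu' : (u : R) = 1 - w := by rw [hw]; ring
  apply Multiplicative.toAdd.injective
  rw [toAdd_mul, torusAction_toAdd, toAdd_inv]
  show Multiplicative.toAdd x =
    (↑w⁻¹ : R) * x.toAdd + (↑u * ↑(1 : Rˣ)⁻¹ : R) * (-((↑w⁻¹ : R) * x.toAdd))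
  rw [inv_one, Units.val_one, hu']
  linear_combination (-(Multiplicative.toAdd x)) * hww

end GroupTheory

/-- For a local ring whose residue field has more than two elements, the natural surjection
`B₂ → T₂` (here `B₂ = R ⋊ T₂`, `SemidirectProduct.rightHom`) induces an isomorphism
`H₁(B₂, ℤ) ≅ H₁(T₂, ℤ)`. -/
theorem stmt_6 (R : Type) [CommRing R] [IsLocalRing R]
    (h : 3 ≤ Nat.card (IsLocalRing.ResidueField R) ∨ Infinite (IsLocalRing.ResidueField R)) :
    IsIso (grpHomologyMap ℤ
      (SemidirectProduct.rightHom (N := Multiplicative R) (φ := torusAction R)) 1) := by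
  obtain ⟨u, w, hw⟩ := exists_good_unit R h
  set q : (Multiplicative R ⋊[torusAction R] (Rˣ × Rˣ)) →*
      (Multiplicative R ⋊[torusAction R] (Rˣ × Rˣ)) :=
    (SemidirectProduct.inr (φ := torusAction R)).comp
      (SemidirectProduct.rightHom (N := Multiplicative R) (φ := torusAction R)) with hq
  -- the key group-level fact
  have hf : ∀ g : Multiplicative R ⋊[torusAction R] (Rˣ × Rˣ),
      BarAux.pi1 ℤ (Multiplicative R ⋊[torusAction R] (Rˣ × Rˣ))
        (Finsupp.single (BarAux.sx1 _ (q g)) 1) =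
      BarAux.pi1 ℤ (Multiplicative R ⋊[torusAction R] (Rˣ × Rˣ))
        (Finsupp.single (BarAux.sx1 _ g) 1) := by
    intro g
    set F := BarAux.pi1Hom ℤ (Multiplicative R ⋊[torusAction R] (Rˣ × Rˣ)) with hF
    have h1 : F (SemidirectProduct.inl g.left) = 1 := by
      obtain ⟨a, b, hab⟩ := inl_eq_commutator R u w hw g.left
      rw [hab, map_mul, map_mul, map_mul, map_inv, map_inv]
      exact commutatorElement_eq_one_iff_mul_comm.mpr (mul_comm _ _)
    have h2 : F g = F (SemidirectProduct.inr g.right) := by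
      conv_lhs => rw [← SemidirectProduct.inl_left_mul_inr_right g]
      rw [map_mul, h1, one_mul]
    have h3 : F (q g) = F g := by
      rw [h2]; rfl
    exact congrArg Multiplicative.toAdd h3
  -- homology level
  have hpi : HomologicalComplex.homologyMap (barMap ℤ q) 1 =
      𝟙 ((barComplex ℤ (Multiplicative R ⋊[torusAction R] (Rˣ × Rˣ))).homology 1) :=
    BarAux.homologyMap_eq ℤ q hf
  set p := grpHomologyMap ℤ
    (SemidirectProduct.rightHom (N := Multiplicative R) (φ := torusAction R)) 1 with hp
  set i := grpHomologyMap ℤ (SemidirectProduct.inr (φ := torusAction R)) 1 with hi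
  have hcomp1 : i ≫ p = 𝟙 _ := by
    show HomologicalComplex.homologyMap _ 1 ≫ HomologicalComplex.homologyMap _ 1 = _
    rw [← HomologicalComplex.homologyMap_comp, ← BarAux.barMap_comp,
      SemidirectProduct.rightHom_comp_inr, BarAux.barMap_id,
      HomologicalComplex.homologyMap_id]
    rfl
  have hcomp2 : p ≫ i = 𝟙 _ := by
    show HomologicalComplex.homologyMap _ 1 ≫ HomologicalComplex.homologyMap _ 1 = _
    rw [← HomologicalComplex.homologyMap_comp, ← BarAux.barMap_comp, ← hq, hpi]
    rfl
  exact ⟨i, hcomp2, hcomp1⟩
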